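/- In a finite Markov chain (with every state having at least one successor and all transition probabilities positive), the runs starting from state c₀ that eventually reach a bottom strongly connected component have probability 1. -/

import Mathlib

open MeasureTheory Finset
open scoped ENNReal Classical

namespace Stmt14

set_option linter.unusedSectionVars false

variable {C : Type*} [Fintype C] [DecidableEq C]

def IsGood (R : C → C → Prop) (c : C) : Prop :=
  ∀ d, Relation.ReflTransGen R c d → Relation.ReflTransGen R d c

lemma isGood_of_reflTransGen {R : C → C → Prop} {c d : C} (h : IsGood R c)
    (hcd : Relation.ReflTransGen R c d) : IsGood R d := by
  intro e hde
  exact (h e (hcd.trans hde)).trans hcd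

lemma exists_reach_good (R : C → C → Prop) (c : C) :
    ∃ d, Relation.ReflTransGen R c d ∧ IsGood R d := by
  classical
  let f : C → ℕ := fun d => (univ.filter fun e => Relation.ReflTransGen R d e).card
  obtain ⟨d, hd, hmin⟩ :=
    (univ.filter fun d => Relation.ReflTransGen R c d).exists_min_image f
      ⟨c, mem_filter.mpr ⟨mem_univ c, Relation.ReflTransGen.refl⟩⟩
  refine ⟨d, (mem_filter.mp hd).2, ?_⟩
  intro e hde
  have hce : Relation.ReflTransGen R c e := (mem_filter.mp hd).2.trans hde
  have hsub : (univ.filter fun x => Relation.ReflTransGen R e x) ⊆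
      (univ.filter fun x => Relation.ReflTransGen R d x) := by
    intro x hx
    simp only [mem_filter, mem_univ, true_and] at *
    exact hde.trans hx
  have hcard : f d ≤ f e := hmin e (mem_filter.mpr ⟨mem_univ e, hce⟩)
  have heq : (univ.filter fun x => Relation.ReflTransGen R e x) =
      (univ.filter fun x => Relation.ReflTransGen R d x) :=
    Finset.eq_of_subset_of_card_le hsub hcard
  have hdmem : d ∈ univ.filter fun x => Relation.ReflTransGen R d x :=
    mem_filter.mpr ⟨mem_univ d, Relation.ReflTransGen.refl⟩
  rw [← heq] at hdmem
  exact (mem_filter.mp hdmem).2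

lemma reflTransGen_path {R : C → C → Prop} {c d : C} (h : Relation.ReflTransGen R c d) :
    ∃ (L : ℕ) (u : ℕ → C), u 0 = c ∧ u L = d ∧ ∀ i, i < L → R (u i) (u (i + 1)) := by
  induction h with
  | refl => exact ⟨0, fun _ => c, rfl, rfl, by omega⟩
  | @tail b d hb hstep ih =>
      obtain ⟨L, u, h0, hL, hsteps⟩ := ih
      refine ⟨L + 1, fun i => if i ≤ L then u i else d, by simp [h0], by simp, ?_⟩
      intro i hi
      by_cases h1 : i < L
      · simp only [if_pos (by omega : i ≤ L), if_pos (by omega : i + 1 ≤ L)]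
        exact hsteps i h1
      · have hiL : i = L := by omega
        subst hiL
        simp only [if_pos le_rfl, if_neg (by omega : ¬ i + 1 ≤ i), hL]
        exact hstep

lemma exists_fixed_path {R : C → C → Prop} (hsucc : ∀ c, ∃ c', R c c') :
    ∃ N : ℕ, ∀ c : C, ∃ u : ℕ → C,
      u 0 = c ∧ (∀ i, i < N → R (u i) (u (i + 1))) ∧ IsGood R (u N) := by
  classical
  have hch : ∀ c : C, ∃ (L : ℕ) (u : ℕ → C), u 0 = c ∧ (∀ i, i < L → R (u i) (u (i + 1))) ∧
      IsGood R (u L) := by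
    intro c
    obtain ⟨d, hcd, hd⟩ := exists_reach_good R c
    obtain ⟨L, u, h0, hL, hsteps⟩ := reflTransGen_path hcd
    exact ⟨L, u, h0, hsteps, hL ▸ hd⟩
  choose L u h0 hsteps hgood using hch
  refine ⟨univ.sup L, fun c => ?_⟩
  set N := univ.sup L with hN
  have hLN : L c ≤ N := Finset.le_sup (mem_univ c)
  let e : ℕ → C := fun j => Nat.rec (u c (L c)) (fun _ x => Classical.choose (hsucc x)) j
  have he0 : e 0 = u c (L c) := rfl
  have hestep : ∀ j, R (e j) (e (j + 1)) := fun j => Classical.choose_spec (hsucc (e j))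
  have hegood : ∀ j, IsGood R (e j) := by
    intro j
    induction j with
    | zero => exact hgood c
    | succ j ih =>
        exact isGood_of_reflTransGen ih (Relation.ReflTransGen.single (hestep j))
  have hv : ∀ k, L c ≤ k → (if k ≤ L c then u c k else e (k - L c)) = e (k - L c) := by
    intro k hk
    by_cases h2 : k ≤ L c
    · have hkL : k = L c := le_antisymm h2 hk
      subst hkL
      simp [he0]
    · simp [h2]
  refine ⟨fun i => if i ≤ L c then u c i else e (i - L c), by simp [h0], ?_, ?_⟩
  · intro i hi
    by_cases h1 : i < L c
    · simp only [if_pos (by omega : i ≤ L c), if_pos (by omega : i + 1 ≤ L c)]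
      exact hsteps c i h1
    · simp only [hv i (by omega), hv (i + 1) (by omega)]
      have h3 : i + 1 - L c = (i - L c) + 1 := by omega
      rw [h3]
      exact hestep _
  · simp only [hv N hLN]
    exact hegood _

variable (pr : C → C → ℝ≥0∞)

noncomputable def Pk : ℕ → C → C → ℝ≥0∞
  | 0 => fun c c' => if c' = c then 1 else 0
  | k + 1 => fun c c' => ∑ b : C, Pk k c b * pr b c'

noncomputable def hfun (g : C → ℝ≥0∞) : ℕ → C → ℝ≥0∞
  | 0 => g
  | n + 1 => fun c => ∑ c' : C, pr c c' * hfun g n c'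

@[simp] lemma Pk_zero (c c' : C) : Pk pr 0 c c' = if c' = c then 1 else 0 := rfl
@[simp] lemma Pk_succ (k : ℕ) (c c' : C) :
    Pk pr (k + 1) c c' = ∑ b : C, Pk pr k c b * pr b c' := rfl
@[simp] lemma hfun_zero (g : C → ℝ≥0∞) (c : C) : hfun pr g 0 c = g c := rfl
@[simp] lemma hfun_succ (g : C → ℝ≥0∞) (n : ℕ) (c : C) :
    hfun pr g (n + 1) c = ∑ c' : C, pr c c' * hfun pr g n c' := rfl

lemma Pk_rowsum (hsum : ∀ c, ∑ c' : C, pr c c' = 1) (k : ℕ) (c : C) :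
    ∑ c' : C, Pk pr k c c' = 1 := by
  classical
  induction k with
  | zero => simp
  | succ k ih =>
      simp only [Pk_succ]
      rw [Finset.sum_comm]
      calc ∑ b : C, ∑ c' : C, Pk pr k c b * pr b c'
          = ∑ b : C, Pk pr k c b * ∑ c' : C, pr b c' := by
            simp [Finset.mul_sum]
        _ = 1 := by simp [hsum, ih]

lemma Pk_good {R : C → C → Prop} (hpr : ∀ b c', pr b c' ≠ 0 → R b c') {c : C}
    (hc : IsGood R c) : ∀ k {c' : C}, Pk pr k c c' ≠ 0 → IsGood R c' := by
  intro k
  induction k with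
  | zero =>
      intro c' h
      simp only [Pk_zero] at h
      by_cases hcc : c' = c
      · subst hcc; exact hc
      · simp [hcc] at h
  | succ k ih =>
      intro c' h
      simp only [Pk_succ] at h
      obtain ⟨b, -, hb⟩ := Finset.exists_ne_zero_of_sum_ne_zero h
      have hb1 : Pk pr k c b ≠ 0 := fun h0 => hb (by simp [h0])
      have hb2 : pr b c' ≠ 0 := fun h0 => hb (by simp [h0])
      exact isGood_of_reflTransGen (ih hb1) (Relation.ReflTransGen.single (hpr _ _ hb2))

lemma Pk_path_le (u : ℕ → C) (k : ℕ) :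
    ∏ i ∈ range k, pr (u i) (u (i + 1)) ≤ Pk pr k (u 0) (u k) := by
  classical
  induction k with
  | zero => simp
  | succ k ih =>
      rw [Finset.prod_range_succ]
      calc (∏ i ∈ range k, pr (u i) (u (i + 1))) * pr (u k) (u (k + 1))
          ≤ Pk pr k (u 0) (u k) * pr (u k) (u (k + 1)) :=
            mul_le_mul_left ih _
        _ ≤ ∑ b : C, Pk pr k (u 0) b * pr b (u (k + 1)) :=
            Finset.single_le_sum (f := fun b => Pk pr k (u 0) b * pr b (u (k + 1)))
              (fun b _ => zero_le) (mem_univ (u k))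
        _ = Pk pr (k + 1) (u 0) (u (k + 1)) := rfl

lemma hfun_add (g : C → ℝ≥0∞) (k : ℕ) :
    ∀ (n : ℕ) (c : C), hfun pr g (k + n) c = ∑ c' : C, Pk pr k c c' * hfun pr g n c' := by
  classical
  induction k with
  | zero =>
      intro n c
      simp [ite_mul, Finset.sum_ite_eq']
  | succ k ih =>
      intro n c
      have h1 : k + 1 + n = k + (n + 1) := by omega
      rw [h1, ih (n + 1) c]
      simp only [hfun_succ, Pk_succ, Finset.sum_mul, Finset.mul_sum]
      rw [Finset.sum_comm]
      refine Finset.sum_congr rfl fun b _ => ?_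
      refine Finset.sum_congr rfl fun c' _ => ?_
      ring

noncomputable def V : ∀ n : ℕ, (Fin (n + 1) → C) → ℝ≥0∞ :=
  fun n w => ∏ i : Fin n, pr (w i.castSucc) (w i.succ)

lemma V_cons (n : ℕ) (x : C) (w : Fin (n + 1) → C) :
    V pr (n + 1) (Fin.cons x w) = pr x (w 0) * V pr n w := by
  unfold V
  rw [Fin.prod_univ_succ]
  have h1 : pr ((Fin.cons x w : Fin (n + 2) → C) (Fin.castSucc 0))
      ((Fin.cons x w : Fin (n + 2) → C) (Fin.succ 0)) = pr x (w 0) := by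
    simp [Fin.cons_succ]
  rw [h1]
  congr 1

lemma sum_words (g : C → ℝ≥0∞) :
    ∀ (n : ℕ) (c : C),
      (∑ w : Fin (n + 1) → C, (if w 0 = c then 1 else 0) * V pr n w * g (w (Fin.last n)))
        = hfun pr g n c := by
  classical
  intro n
  induction n with
  | zero =>
      intro c
      rw [← (Equiv.funUnique (Fin 1) C).symm.sum_comp]
      simp only [Equiv.funUnique_symm_apply]
      simp [V, Fin.last, ite_mul, Finset.sum_ite_eq']
      rw [Finset.sum_eq_single c (by intro b _ hb; simp [hb]) (by simp)]
      simp
  | succ n ih =>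
      intro c
      rw [← (Fin.consEquiv (fun _ : Fin (n + 2) => C)).sum_comp]
      rw [Fintype.sum_prod_type]
      simp only [Fin.consEquiv_apply]
      have hlast : ∀ (x : C) (w : Fin (n + 1) → C),
          (Fin.cons x w : Fin (n + 2) → C) (Fin.last (n + 1)) = w (Fin.last n) := by
        intro x w
        rw [← Fin.succ_last, Fin.cons_succ]
      calc ∑ x : C, ∑ w : Fin (n + 1) → C,
            (if (Fin.cons x w : Fin (n + 2) → C) 0 = c then 1 else 0)
              * V pr (n + 1) (Fin.cons x w)
              * g ((Fin.cons x w : Fin (n + 2) → C) (Fin.last (n + 1)))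
          = ∑ x : C, if x = c then
              (∑ w : Fin (n + 1) → C, pr x (w 0) * V pr n w * g (w (Fin.last n))) else 0 := by
            refine Finset.sum_congr rfl fun x _ => ?_
            simp only [Fin.cons_zero, V_cons, hlast]
            by_cases hx : x = c
            · simp [hx]
            · simp [hx]
        _ = ∑ w : Fin (n + 1) → C, pr c (w 0) * V pr n w * g (w (Fin.last n)) := by
            rw [Finset.sum_ite_eq' univ c]
            simp
        _ = ∑ c' : C, pr c c' * hfun pr g n c' := by
            simp only [← ih, Finset.mul_sum]
            rw [Finset.sum_comm]
            refine Finset.sum_congr rfl fun w _ => ?_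
            simp only [mul_ite, mul_one, mul_zero, ite_mul, zero_mul, one_mul]
            rw [Finset.sum_ite_eq univ (w 0)
              (fun c' => pr c c' * (V pr n w * g (w (Fin.last n))))]
            simp [mul_assoc]
        _ = hfun pr g (n + 1) c := rfl



end Stmt14

open Stmt14

/-- In a finite Markov chain where every state has a successor and all transition
probabilities are positive, runs from c₀ almost surely eventually reach a bottom
strongly connected component (a state from which reachability is symmetric). -/
theorem stmt14 {C : Type*} [Fintype C] [DecidableEq C] [MeasurableSpace C]
    (Δ : Set (C × C)) (hsucc : ∀ c : C, ∃ c', (c, c') ∈ Δ) (c₀ : C)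
    (pr : C → C → ℝ≥0∞)
    (hpos : ∀ c c', 0 < pr c c' ↔ (c, c') ∈ Δ)
    (hsum : ∀ c, ∑ c' : C, pr c c' = 1)
    (μ : Measure (ℕ → C))
    (hμ : ∀ (n : ℕ) (w : ℕ → C),
      μ {f | ∀ i ≤ n, f i = w i} =
        (if w 0 = c₀ then 1 else 0) * ∏ i ∈ Finset.range n, pr (w i) (w (i + 1))) :
    μ {f : ℕ → C | ∃ i, ∀ d : C,
        Relation.ReflTransGen (fun x y => (x, y) ∈ Δ) (f i) d →
          Relation.ReflTransGen (fun x y => (x, y) ∈ Δ) d (f i)} = 1 := by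
  classical
  have hNe : Nonempty C := ⟨c₀⟩
  set R : C → C → Prop := fun x y => (x, y) ∈ Δ with hRdef
  set T : Set (ℕ → C) := {f : ℕ → C | ∃ i, ∀ d : C,
      Relation.ReflTransGen R (f i) d → Relation.ReflTransGen R d (f i)} with hTdef
  have hTmem : ∀ f : ℕ → C, f ∈ T ↔ ∃ i, IsGood R (f i) := fun f => Iff.rfl
  have hpr : ∀ b c' : C, pr b c' ≠ 0 → R b c' :=
    fun b c' h => (hpos b c').mp (pos_iff_ne_zero.mpr h)
  set g : C → ℝ≥0∞ := fun c => if IsGood R c then 0 else 1 with hgdef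
  have hg1 : ∀ c, g c ≤ 1 := by
    intro c; by_cases h : IsGood R c <;> simp [hgdef, h]
  -- fixed-length paths to good states
  obtain ⟨N, hpath⟩ := exists_fixed_path (R := R) hsucc
  choose upath hu0 husteps hugood using hpath
  set π : C → ℝ≥0∞ := fun c => ∏ i ∈ range N, pr (upath c i) (upath c (i + 1)) with hπdef
  set p : ℝ≥0∞ := univ.inf' univ_nonempty π with hpdef
  have hp_le : ∀ c, p ≤ π c := fun c => Finset.inf'_le _ (mem_univ c)
  have hπ_le : ∀ c, π c ≤ Pk pr N c (upath c N) := by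
    intro c
    have := Pk_path_le pr (upath c) N
    rwa [hu0 c] at this
  have hp_pos : 0 < p := by
    rw [hpdef, Finset.lt_inf'_iff]
    intro c _
    rw [hπdef]
    refine CanonicallyOrderedAdd.prod_pos.mpr ?_
    intro i hi
    exact (hpos _ _).mpr (husteps c i (mem_range.mp hi))
  have hPk_le_one : ∀ k c c', Pk pr k c c' ≤ 1 := by
    intro k c c'
    calc Pk pr k c c' ≤ ∑ b : C, Pk pr k c b :=
          Finset.single_le_sum (f := fun b => Pk pr k c b) (fun b _ => zero_le) (mem_univ c')
      _ = 1 := Pk_rowsum pr hsum k c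
  have hp_le_one : p ≤ 1 := (hp_le c₀).trans ((hπ_le c₀).trans (hPk_le_one N c₀ _))
  -- good states have hfun = 0
  have hgood0 : ∀ (n : ℕ) (c : C), IsGood R c → hfun pr g n c = 0 := by
    intro n
    induction n with
    | zero => intro c hc; simp [hgdef, hc]
    | succ n ih =>
        intro c hc
        rw [hfun_succ]
        refine Finset.sum_eq_zero fun c' _ => ?_
        by_cases h0 : pr c c' = 0
        · simp [h0]
        · have : IsGood R c' :=
            isGood_of_reflTransGen hc (Relation.ReflTransGen.single (hpr _ _ h0))
          simp [ih c' this]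
  have hbound1 : ∀ (n : ℕ) (c : C), hfun pr g n c ≤ 1 := by
    intro n
    induction n with
    | zero => intro c; simpa using hg1 c
    | succ n ih =>
        intro c
        rw [hfun_succ]
        calc ∑ c' : C, pr c c' * hfun pr g n c' ≤ ∑ c' : C, pr c c' * 1 :=
              Finset.sum_le_sum fun c' _ => mul_le_mul_right (ih c') _
          _ = 1 := by simp [hsum]
  -- contraction
  have hcontr : ∀ (n : ℕ) (B : ℝ≥0∞), (∀ c', hfun pr g n c' ≤ B) →
      ∀ c, hfun pr g (N + n) c ≤ (1 - p) * B := by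
    intro n B hB c
    rw [hfun_add]
    by_cases hc : IsGood R c
    · have : ∀ c' ∈ (univ : Finset C), Pk pr N c c' * hfun pr g n c' = 0 := by
        intro c' _
        by_cases h0 : Pk pr N c c' = 0
        · simp [h0]
        · simp [hgood0 n c' (Pk_good pr hpr hc N h0)]
      rw [Finset.sum_eq_zero this]
      exact zero_le
    · rw [← Finset.sum_filter_add_sum_filter_not univ (fun c' => IsGood R c')]
      have hgoodpart : ∑ c' ∈ univ.filter (fun c' => IsGood R c'),
          Pk pr N c c' * hfun pr g n c' = 0 := by
        refine Finset.sum_eq_zero fun c' hc' => ?_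
        simp [hgood0 n c' (mem_filter.mp hc').2]
      rw [hgoodpart, zero_add]
      have hbadsum : ∑ c' ∈ univ.filter (fun c' => ¬ IsGood R c'), Pk pr N c c' ≤ 1 - p := by
        have htot : (∑ c' ∈ univ.filter (fun c' => IsGood R c'), Pk pr N c c')
            + ∑ c' ∈ univ.filter (fun c' => ¬ IsGood R c'), Pk pr N c c' = 1 := by
          rw [Finset.sum_filter_add_sum_filter_not]
          exact Pk_rowsum pr hsum N c
        have hgoodge : p ≤ ∑ c' ∈ univ.filter (fun c' => IsGood R c'), Pk pr N c c' := by
          refine (hp_le c).trans ((hπ_le c).trans ?_)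
          refine Finset.single_le_sum (f := fun c' => Pk pr N c c') (fun b _ => zero_le) ?_
          exact mem_filter.mpr ⟨mem_univ _, hugood c⟩
        refine ENNReal.le_sub_of_add_le_right (by
          intro h; exact (hp_le_one.trans_lt (h ▸ lt_top_iff_ne_top.mpr ENNReal.one_ne_top)).ne rfl) ?_
        calc (∑ c' ∈ univ.filter (fun c' => ¬ IsGood R c'), Pk pr N c c') + p
            ≤ (∑ c' ∈ univ.filter (fun c' => ¬ IsGood R c'), Pk pr N c c')
              + ∑ c' ∈ univ.filter (fun c' => IsGood R c'), Pk pr N c c' :=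
              add_le_add le_rfl hgoodge
          _ = 1 := by rw [add_comm]; exact htot
      calc ∑ c' ∈ univ.filter (fun c' => ¬ IsGood R c'), Pk pr N c c' * hfun pr g n c'
          ≤ ∑ c' ∈ univ.filter (fun c' => ¬ IsGood R c'), Pk pr N c c' * B :=
            Finset.sum_le_sum fun c' _ => mul_le_mul_right (hB c') _
        _ = (∑ c' ∈ univ.filter (fun c' => ¬ IsGood R c'), Pk pr N c c') * B := by
            rw [Finset.sum_mul]
        _ ≤ (1 - p) * B := mul_le_mul_left hbadsum _
  have hiter : ∀ (k : ℕ) (c : C), hfun pr g (N * k) c ≤ (1 - p) ^ k := by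
    intro k
    induction k with
    | zero => intro c; simpa using hbound1 0 c
    | succ k ih =>
        intro c
        have hNk : N * (k + 1) = N + N * k := by ring
        rw [hNk, pow_succ, mul_comm ((1 - p) ^ k)]
        exact hcontr (N * k) ((1 - p) ^ k) ih c
  -- measure of the whole space
  have huniv : μ Set.univ = 1 := by
    refine le_antisymm ?_ ?_
    · have hcover : (Set.univ : Set (ℕ → C)) ⊆
          ⋃ c ∈ (univ : Finset C), {f : ℕ → C | ∀ i ≤ 0, f i = (fun _ => c) i} := by
        intro f _
        refine Set.mem_biUnion (mem_univ (f 0)) ?_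
        intro i hi
        have : i = 0 := Nat.le_zero.mp hi
        subst this; rfl
      calc μ Set.univ ≤ ∑ c : C, μ {f : ℕ → C | ∀ i ≤ 0, f i = (fun _ => c) i} :=
            (measure_mono hcover).trans (measure_biUnion_finset_le _ _)
        _ = ∑ c : C, if c = c₀ then 1 else 0 := by
            refine Finset.sum_congr rfl fun c _ => ?_
            rw [hμ 0 (fun _ => c)]
            simp
        _ = 1 := by simp
    · have h1 : μ {f : ℕ → C | ∀ i ≤ 0, f i = (fun _ => c₀) i} = 1 := by
        rw [hμ 0]; simp
      rw [← h1]
      exact measure_mono (Set.subset_univ _)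
  -- bound on μ Tᶜ
  have hμTc : ∀ n : ℕ, μ Tᶜ ≤ hfun pr g n c₀ := by
    intro n
    set ext : (Fin (n + 1) → C) → (ℕ → C) :=
      fun w i => w ⟨min i n, by omega⟩ with hextdef
    have hsub : Tᶜ ⊆ ⋃ w ∈ (univ : Finset (Fin (n + 1) → C)).filter
        (fun w => ¬ IsGood R (w (Fin.last n))), {f : ℕ → C | ∀ i ≤ n, f i = ext w i} := by
      intro f hf
      have hnot : ¬ IsGood R (f n) := by
        simp only [hTdef, Set.mem_compl_iff, Set.mem_setOf_eq, not_exists] at hf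
        exact fun h => hf n h
      have hw1 : (fun j : Fin (n + 1) => f j) ∈ (univ : Finset (Fin (n + 1) → C)).filter
          (fun w => ¬ IsGood R (w (Fin.last n))) := by
        refine mem_filter.mpr ⟨mem_univ _, ?_⟩
        simpa using hnot
      have hw2 : f ∈ {f' : ℕ → C | ∀ i ≤ n, f' i = ext (fun j : Fin (n + 1) => f j) i} := by
        intro i hi
        simp only [hextdef]
        congr 1
        omega
      exact Set.mem_biUnion hw1 hw2
    have hcalc : ∀ w : Fin (n + 1) → C,
        μ {f : ℕ → C | ∀ i ≤ n, f i = ext w i} =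
          (if w 0 = c₀ then 1 else 0) * V pr n w := by
      intro w
      rw [hμ n (ext w)]
      have h0 : ext w 0 = w 0 := by
        simp only [hextdef]
        congr 1
      have hprod : ∏ i ∈ range n, pr (ext w i) (ext w (i + 1)) = V pr n w := by
        rw [V, ← Fin.prod_univ_eq_prod_range]
        refine Finset.prod_congr rfl fun i _ => ?_
        have e1 : ext w i = w i.castSucc := by
          simp only [hextdef]; congr 1
          exact Fin.ext (by simp [Nat.min_eq_left (le_of_lt i.is_lt)])
        have e2 : ext w ((i : ℕ) + 1) = w i.succ := by
          simp only [hextdef]; congr 1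
          exact Fin.ext (by simp [Nat.min_eq_left (Nat.succ_le_of_lt i.is_lt)])
        rw [e1, e2]
      rw [h0, hprod]
    calc μ Tᶜ ≤ ∑ w ∈ (univ : Finset (Fin (n + 1) → C)).filter
          (fun w => ¬ IsGood R (w (Fin.last n))), μ {f : ℕ → C | ∀ i ≤ n, f i = ext w i} :=
          (measure_mono hsub).trans (measure_biUnion_finset_le _ _)
      _ = ∑ w ∈ (univ : Finset (Fin (n + 1) → C)).filter
          (fun w => ¬ IsGood R (w (Fin.last n))), (if w 0 = c₀ then 1 else 0) * V pr n w := by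
          exact Finset.sum_congr rfl fun w _ => hcalc w
      _ = ∑ w : Fin (n + 1) → C,
          (if w 0 = c₀ then 1 else 0) * V pr n w * g (w (Fin.last n)) := by
          rw [Finset.sum_filter]
          refine Finset.sum_congr rfl fun w _ => ?_
          by_cases hw : IsGood R (w (Fin.last n)) <;> simp [hgdef, hw]
      _ = hfun pr g n c₀ := sum_words pr g n c₀
  have hTc0 : μ Tᶜ = 0 := by
    have hlim : Filter.Tendsto (fun k : ℕ => (1 - p) ^ k) Filter.atTop (nhds 0) :=
      ENNReal.tendsto_pow_atTop_nhds_zero_of_lt_one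
        (ENNReal.sub_lt_self ENNReal.one_ne_top one_ne_zero (ne_of_gt hp_pos))
    have hle : ∀ k : ℕ, μ Tᶜ ≤ (1 - p) ^ k := fun k => (hμTc (N * k)).trans (hiter k c₀)
    exact le_antisymm (ge_of_tendsto hlim (Filter.Eventually.of_forall hle)) zero_le
  refine le_antisymm (huniv ▸ measure_mono (Set.subset_univ _)) ?_
  calc (1 : ℝ≥0∞) = μ Set.univ := huniv.symm
    _ = μ (T ∪ Tᶜ) := by rw [Set.union_compl_self]
    _ ≤ μ T + μ Tᶜ := measure_union_le _ _
    _ = μ T := by rw [hTc0, add_zero]
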